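/- (Key limiting claim in the proof that the control limit tends to ξ.) For each t ∈ {0,1,…,T−1} and each x ∈ ℕ with x < ξ, lim_{k→∞} E_{(Z,K)}[ Ṽ_{t+1}(x+Z, k+Z+K) − Ṽ_{t+1}(Z, k+Z+K) ] = 0, where at stage k the expectation is taken with Z ~ NB(α0+k, p_t) and K ~ NB((N−1)·(α0+k), p_t) independent. -/

import Mathlib

open Filter

/-- Negative Binomial pmf with real shape `r` and success probability `p`:
`NB(r,p)(z) = Γ(z+r)/(Γ(r)·z!)·p^r·(1−p)^z` for `r > 0`, and `NB(0,p)` is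
the point mass at `0`. -/
noncomputable def NB (r p : ℝ) (z : ℕ) : ℝ :=
  if r = 0 then (if z = 0 then (1 : ℝ) else 0)
  else Real.Gamma ((z : ℝ) + r) / (Real.Gamma r * (Nat.factorial z : ℝ)) * p ^ r * (1 - p) ^ z

lemma gamma_prod {r : ℝ} (hr : 0 < r) (z : ℕ) :
    Real.Gamma ((z : ℝ) + r) = (∏ i ∈ Finset.range z, (r + (i : ℝ))) * Real.Gamma r := by
  induction z with
  | zero => simp
  | succ n ih =>
    have h : ((n + 1 : ℕ) : ℝ) + r = ((n : ℝ) + r) + 1 := by push_cast; ring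
    rw [h, Real.Gamma_add_one (by positivity), ih, Finset.prod_range_succ]
    push_cast
    ring

lemma NB_eq {r : ℝ} (hr : 0 < r) (p : ℝ) (z : ℕ) :
    NB r p z = (∏ i ∈ Finset.range z, (r + (i : ℝ))) / (z.factorial : ℝ) * p ^ r
      * (1 - p) ^ z := by
  have hΓ : Real.Gamma r ≠ 0 := (Real.Gamma_pos_of_pos hr).ne'
  rw [NB, if_neg hr.ne', gamma_prod hr,
    mul_comm (∏ i ∈ Finset.range z, (r + (i : ℝ))) (Real.Gamma r),
    mul_div_mul_left _ _ hΓ]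

lemma NB_nonneg {r p : ℝ} (hr : 0 ≤ r) (hp : 0 < p) (hp1 : p ≤ 1) (z : ℕ) :
    0 ≤ NB r p z := by
  rcases eq_or_lt_of_le hr with h | h
  · rw [NB, if_pos h.symm]
    split <;> norm_num
  · rw [NB, if_neg h.ne']
    have h1 : 0 < Real.Gamma ((z : ℝ) + r) := Real.Gamma_pos_of_pos (by positivity)
    have h2 : 0 < Real.Gamma r := Real.Gamma_pos_of_pos h
    have h3 : (0 : ℝ) ≤ 1 - p := by linarith
    have h4 : 0 < (z.factorial : ℝ) := by positivity
    exact mul_nonneg (mul_nonneg (div_nonneg h1.le (by positivity))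
      (Real.rpow_nonneg hp.le r)) (pow_nonneg h3 z)

lemma NB_summable_le {r p : ℝ} (hr : 0 ≤ r) (hp : 0 < p) (hp1 : p < 1) :
    Summable (NB r p) ∧ ∑' z, NB r p z ≤ 1 / p := by
  rcases eq_or_lt_of_le hr with h | h
  · have hfe : NB r p = fun z : ℕ => if z = 0 then (1 : ℝ) else 0 := by
      funext z; rw [NB, if_pos h.symm]
    constructor
    · rw [hfe]
      exact summable_of_ne_finset_zero (s := {0}) (by intro z hz; simp at hz; simp [hz])
    · rw [hfe]; simp only [tsum_ite_eq]
      rw [le_div_iff₀ hp, one_mul]; linarith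
  · set m := ⌈r⌉₊ - 1 with hm
    have hceil : 1 ≤ ⌈r⌉₊ := Nat.ceil_pos.mpr h
    have hm1 : (m : ℕ) + 1 = ⌈r⌉₊ := by omega
    have hmr : (m : ℝ) ≤ r := by
      have h1 : (⌈r⌉₊ : ℝ) < r + 1 := Nat.ceil_lt_add_one hr
      have h2 : ((m : ℕ) : ℝ) = (⌈r⌉₊ : ℝ) - 1 := by
        rw [← hm1]; push_cast; ring
      linarith
    have hrm1 : r ≤ (m : ℝ) + 1 := by
      have := Nat.le_ceil r
      rw [← hm1] at this; push_cast at this; linarith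
    have hx0 : (0 : ℝ) < 1 - p := by linarith
    have hx : ‖(1 - p : ℝ)‖ < 1 := by
      rw [Real.norm_eq_abs, abs_of_pos hx0]; linarith
    have hasc : ∀ z : ℕ, (((m + 1).ascFactorial z : ℕ) : ℝ)
        = ∏ i ∈ Finset.range z, ((m : ℝ) + 1 + (i : ℝ)) := by
      intro z
      induction z with
      | zero => simp
      | succ n ih =>
        rw [Nat.ascFactorial_succ, Finset.prod_range_succ, ← ih]
        push_cast; ring
    have hbound : ∀ z : ℕ, NB r p z ≤ (((z + m).choose m : ℕ) : ℝ) * (1 - p) ^ z * p ^ r := by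
      intro z
      rw [NB_eq h]
      have hfac : (0 : ℝ) < (z.factorial : ℝ) := by positivity
      have hprod : (∏ i ∈ Finset.range z, (r + (i : ℝ)))
          ≤ (((m + 1).ascFactorial z : ℕ) : ℝ) := by
        rw [hasc z]
        apply Finset.prod_le_prod
        · intro i _; positivity
        · intro i _; linarith
      have hchoose : (((m + 1).ascFactorial z : ℕ) : ℝ)
          = (z.factorial : ℝ) * (((z + m).choose m : ℕ) : ℝ) := by
        rw [Nat.ascFactorial_eq_factorial_mul_choose]
        have hsym := Nat.choose_symm (n := z + m) (k := z) (Nat.le_add_right z m)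
        rw [show z + m - z = m from by omega] at hsym
        have : (m + z).choose z = (z + m).choose m := by rw [add_comm m z, hsym]
        rw [this]; push_cast; ring
      have hdiv : (∏ i ∈ Finset.range z, (r + (i : ℝ))) / (z.factorial : ℝ)
          ≤ (((z + m).choose m : ℕ) : ℝ) := by
        rw [div_le_iff₀ hfac]
        calc (∏ i ∈ Finset.range z, (r + (i : ℝ)))
            ≤ (((m + 1).ascFactorial z : ℕ) : ℝ) := hprod
          _ = (((z + m).choose m : ℕ) : ℝ) * (z.factorial : ℝ) := by rw [hchoose]; ring
      have hpr : (0 : ℝ) ≤ p ^ r := Real.rpow_nonneg hp.le r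
      have h1p : (0 : ℝ) ≤ (1 - p) ^ z := pow_nonneg hx0.le z
      calc (∏ i ∈ Finset.range z, (r + (i : ℝ))) / (z.factorial : ℝ) * p ^ r * (1 - p) ^ z
          ≤ (((z + m).choose m : ℕ) : ℝ) * p ^ r * (1 - p) ^ z := by
            apply mul_le_mul_of_nonneg_right (mul_le_mul_of_nonneg_right hdiv hpr) h1p
        _ = (((z + m).choose m : ℕ) : ℝ) * (1 - p) ^ z * p ^ r := by ring
    have hgs : Summable (fun z : ℕ => (((z + m).choose m : ℕ) : ℝ) * (1 - p) ^ z * p ^ r) :=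
      (summable_choose_mul_geometric_of_norm_lt_one m hx).mul_right _
    have hsumm : Summable (NB r p) :=
      Summable.of_nonneg_of_le (NB_nonneg hr hp hp1.le) hbound hgs
    refine ⟨hsumm, ?_⟩
    have ht1 : ∑' z, NB r p z
        ≤ ∑' z : ℕ, (((z + m).choose m : ℕ) : ℝ) * (1 - p) ^ z * p ^ r :=
      Summable.tsum_le_tsum hbound hsumm hgs
    have ht2 : ∑' z : ℕ, (((z + m).choose m : ℕ) : ℝ) * (1 - p) ^ z * p ^ r
        = (1 / (1 - (1 - p)) ^ (m + 1)) * p ^ r := by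
      rw [tsum_mul_right, tsum_choose_mul_geometric_of_norm_lt_one m hx]
    have hps : (1 : ℝ) - (1 - p) = p := by ring
    rw [ht2, hps] at ht1
    have hfin : (1 / p ^ (m + 1)) * p ^ r ≤ 1 / p := by
      have hpm : p ^ r ≤ p ^ (m : ℝ) := Real.rpow_le_rpow_of_exponent_ge hp hp1.le hmr
      have hpmc : p ^ (m : ℝ) = p ^ (m : ℕ) := Real.rpow_natCast p m
      have hppos : (0 : ℝ) < p ^ (m + 1) := by positivity
      rw [div_mul_eq_mul_div, one_mul, div_le_div_iff₀ hppos hp]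
      calc p ^ r * p = p * p ^ r := by ring
        _ ≤ p * p ^ (m : ℕ) := by
            rw [← hpmc]; exact mul_le_mul_of_nonneg_left hpm hp.le
        _ = 1 * p ^ (m + 1) := by rw [pow_succ]; ring
    linarith

/-- `p_t = (β0 + N·t)/(β0 + N·t + 1)`. -/
noncomputable def pt (β0 : ℝ) (N t : ℕ) : ℝ :=
  (β0 + (N : ℝ) * (t : ℝ)) / (β0 + (N : ℝ) * (t : ℝ) + 1)

/-- Expectation `E_{(Z,K)}[f(Z,K)]` with `Z ~ NB(α0+k, p_t)` and
`K ~ NB((N−1)(α0+k), p_t)` independent. -/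
noncomputable def EZK (α0 β0 : ℝ) (N t k : ℕ) (f : ℕ → ℕ → ℝ) : ℝ :=
  ∑' z : ℕ, ∑' κ : ℕ,
    NB (α0 + (k : ℝ)) (pt β0 N t) z * NB (((N : ℝ) - 1) * (α0 + (k : ℝ))) (pt β0 N t) κ * f z κ

lemma pt_facts {β0 : ℝ} (hβ0 : 0 < β0) (N t : ℕ) :
    0 < pt β0 N t ∧ pt β0 N t < 1 ∧ 1 / pt β0 N t ≤ (β0 + 1) / β0 := by
  have ha0 : (0 : ℝ) ≤ (N : ℝ) * (t : ℝ) := by positivity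
  have ha : 0 < β0 + (N : ℝ) * (t : ℝ) := by linarith
  have ha1 : 0 < β0 + (N : ℝ) * (t : ℝ) + 1 := by linarith
  refine ⟨div_pos ha ha1, (div_lt_one ha1).mpr (by linarith), ?_⟩
  rw [pt, one_div_div, div_le_div_iff₀ ha hβ0]
  nlinarith

/-- Recursion bounding the value function. -/
noncomputable def Dseq (cu M : ℝ) : ℕ → ℝ
  | 0 => cu
  | j + 1 => cu + M * Dseq cu M j

lemma EZK_nonneg_le {α0 β0 : ℝ} (hα0 : 0 < α0) (hβ0 : 0 < β0) {N : ℕ} (hN : 1 ≤ N)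
    (t k : ℕ) (f : ℕ → ℕ → ℝ) (B : ℝ)
    (hf0 : ∀ z κ, 0 ≤ f z κ) (hfB : ∀ z κ, f z κ ≤ B) :
    0 ≤ EZK α0 β0 N t k f ∧ EZK α0 β0 N t k f ≤ ((β0 + 1) / β0) ^ 2 * B := by
  obtain ⟨hp, hp1, hpM⟩ := pt_facts hβ0 N t
  set p := pt β0 N t
  set M := (β0 + 1) / β0 with hMdef
  have hM0 : 0 < M := by rw [hMdef]; positivity
  have hB : 0 ≤ B := le_trans (hf0 0 0) (hfB 0 0)
  have hrZ : (0 : ℝ) ≤ α0 + (k : ℝ) := by positivity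
  have hrK : (0 : ℝ) ≤ ((N : ℝ) - 1) * (α0 + (k : ℝ)) := by
    have : (1 : ℝ) ≤ (N : ℝ) := by exact_mod_cast hN
    have h2 : (0 : ℝ) ≤ (N : ℝ) - 1 := by linarith
    positivity
  set NZ := NB (α0 + (k : ℝ)) p with hNZdef
  set NK := NB (((N : ℝ) - 1) * (α0 + (k : ℝ))) p with hNKdef
  have hNZ0 : ∀ z, 0 ≤ NZ z := NB_nonneg hrZ hp hp1.le
  have hNK0 : ∀ z, 0 ≤ NK z := NB_nonneg hrK hp hp1.le
  obtain ⟨hNZs, hNZt⟩ := NB_summable_le hrZ hp hp1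
  obtain ⟨hNKs, hNKt⟩ := NB_summable_le hrK hp hp1
  have hNZM : ∑' z, NZ z ≤ M := le_trans hNZt hpM
  have hNKM : ∑' z, NK z ≤ M := le_trans hNKt hpM
  have hNZt0 : 0 ≤ ∑' z, NZ z := tsum_nonneg hNZ0
  have hNKt0 : 0 ≤ ∑' z, NK z := tsum_nonneg hNK0
  have hterm0 : ∀ z κ, 0 ≤ NZ z * NK κ * f z κ := fun z κ =>
    mul_nonneg (mul_nonneg (hNZ0 z) (hNK0 κ)) (hf0 z κ)
  have htermle : ∀ z κ, NZ z * NK κ * f z κ ≤ NZ z * B * NK κ := by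
    intro z κ
    calc NZ z * NK κ * f z κ ≤ NZ z * NK κ * B :=
          mul_le_mul_of_nonneg_left (hfB z κ) (mul_nonneg (hNZ0 z) (hNK0 κ))
      _ = NZ z * B * NK κ := by ring
  have hinner_s : ∀ z, Summable (fun κ => NZ z * NK κ * f z κ) := fun z =>
    Summable.of_nonneg_of_le (hterm0 z) (htermle z) (hNKs.mul_left _)
  have hinner0 : ∀ z, 0 ≤ ∑' κ, NZ z * NK κ * f z κ := fun z =>
    tsum_nonneg (hterm0 z)
  have hinnerle : ∀ z, ∑' κ, NZ z * NK κ * f z κ ≤ NZ z * (M * B) := by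
    intro z
    calc ∑' κ, NZ z * NK κ * f z κ ≤ ∑' κ, NZ z * B * NK κ :=
          Summable.tsum_le_tsum (htermle z) (hinner_s z) (hNKs.mul_left _)
      _ = NZ z * B * ∑' κ, NK κ := tsum_mul_left
      _ ≤ NZ z * B * M := mul_le_mul_of_nonneg_left hNKM (mul_nonneg (hNZ0 z) hB)
      _ = NZ z * (M * B) := by ring
  have houter_s : Summable (fun z => ∑' κ, NZ z * NK κ * f z κ) :=
    Summable.of_nonneg_of_le hinner0 hinnerle (hNZs.mul_right _)
  constructor
  · exact tsum_nonneg hinner0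
  · calc EZK α0 β0 N t k f ≤ ∑' z, NZ z * (M * B) :=
        Summable.tsum_le_tsum hinnerle houter_s (hNZs.mul_right _)
      _ = (∑' z, NZ z) * (M * B) := tsum_mul_right
      _ ≤ M * (M * B) := by
          apply mul_le_mul_of_nonneg_right hNZM (by positivity)
      _ = M ^ 2 * B := by ring


lemma NB_tendsto {α0 p : ℝ} (hα0 : 0 < α0) (hp : 0 < p) (hp1 : p < 1) (z : ℕ) :
    Filter.Tendsto (fun k : ℕ => NB (α0 + (k : ℝ)) p z) atTop (nhds 0) := by
  set C := (α0 + (z : ℝ) + 1) ^ z * p ^ α0 with hCdef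
  have hC0 : 0 ≤ C := by
    have := Real.rpow_nonneg hp.le α0
    positivity
  have hb : ∀ k : ℕ, NB (α0 + (k : ℝ)) p z ≤ C * (((k : ℝ) + 1) ^ z * p ^ k) := by
    intro k
    have hr : (0 : ℝ) < α0 + (k : ℝ) := by positivity
    rw [NB_eq hr]
    have hprod0 : (0 : ℝ) ≤ ∏ i ∈ Finset.range z, (α0 + (k : ℝ) + (i : ℝ)) :=
      Finset.prod_nonneg (fun i _ => by positivity)
    have hpr : (0 : ℝ) ≤ p ^ (α0 + (k : ℝ)) := Real.rpow_nonneg hp.le _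
    have h4 : (1 - p) ^ z ≤ 1 := pow_le_one₀ (by linarith) (by linarith)
    have h5 : (∏ i ∈ Finset.range z, (α0 + (k : ℝ) + (i : ℝ))) / (z.factorial : ℝ)
        ≤ ∏ i ∈ Finset.range z, (α0 + (k : ℝ) + (i : ℝ)) := by
      apply div_le_self hprod0
      exact_mod_cast Nat.one_le_iff_ne_zero.mpr z.factorial_ne_zero
    have h1 : (∏ i ∈ Finset.range z, (α0 + (k : ℝ) + (i : ℝ)))
        ≤ (α0 + (k : ℝ) + (z : ℝ)) ^ z := by
      calc (∏ i ∈ Finset.range z, (α0 + (k : ℝ) + (i : ℝ)))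
          ≤ ∏ _i ∈ Finset.range z, (α0 + (k : ℝ) + (z : ℝ)) := by
            apply Finset.prod_le_prod (fun i _ => by positivity)
            intro i hi
            have : (i : ℝ) ≤ (z : ℝ) := by
              exact_mod_cast (Finset.mem_range.mp hi).le
            linarith
        _ = (α0 + (k : ℝ) + (z : ℝ)) ^ z := by
            rw [Finset.prod_const, Finset.card_range]
    have h2 : (α0 + (k : ℝ) + (z : ℝ)) ^ z
        ≤ (α0 + (z : ℝ) + 1) ^ z * ((k : ℝ) + 1) ^ z := by
      rw [← mul_pow]
      apply pow_le_pow_left₀ (by positivity)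
      have hk0 : (0 : ℝ) ≤ (k : ℝ) := Nat.cast_nonneg k
      have hz0 : (0 : ℝ) ≤ (z : ℝ) := Nat.cast_nonneg z
      nlinarith
    have h3 : p ^ (α0 + (k : ℝ)) = p ^ α0 * p ^ k := by
      rw [Real.rpow_add hp, Real.rpow_natCast]
    have hpk : (0 : ℝ) ≤ p ^ k := by positivity
    have hpα : (0 : ℝ) ≤ p ^ α0 := Real.rpow_nonneg hp.le α0
    calc (∏ i ∈ Finset.range z, (α0 + (k : ℝ) + (i : ℝ))) / (z.factorial : ℝ)
          * p ^ (α0 + (k : ℝ)) * (1 - p) ^ z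
        ≤ (∏ i ∈ Finset.range z, (α0 + (k : ℝ) + (i : ℝ))) / (z.factorial : ℝ)
          * p ^ (α0 + (k : ℝ)) * 1 := by
          apply mul_le_mul_of_nonneg_left h4
          exact mul_nonneg (div_nonneg hprod0 (by positivity)) hpr
      _ = (∏ i ∈ Finset.range z, (α0 + (k : ℝ) + (i : ℝ))) / (z.factorial : ℝ)
          * p ^ (α0 + (k : ℝ)) := by ring
      _ ≤ (α0 + (k : ℝ) + (z : ℝ)) ^ z * p ^ (α0 + (k : ℝ)) :=
          mul_le_mul_of_nonneg_right (le_trans h5 h1) hpr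
      _ ≤ ((α0 + (z : ℝ) + 1) ^ z * ((k : ℝ) + 1) ^ z) * p ^ (α0 + (k : ℝ)) :=
          mul_le_mul_of_nonneg_right h2 hpr
      _ = C * (((k : ℝ) + 1) ^ z * p ^ k) := by rw [h3, hCdef]; ring
  have hg : Filter.Tendsto (fun k : ℕ => ((k : ℝ)) ^ z * p ^ k) atTop (nhds 0) := by
    exact tendsto_pow_const_mul_const_pow_of_lt_one z hp.le hp1
  have hg1 : Filter.Tendsto (fun k : ℕ => (((k + 1 : ℕ) : ℝ)) ^ z * p ^ (k + 1)) atTop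
      (nhds 0) := (Filter.tendsto_add_atTop_iff_nat 1).mpr hg
  have hg2 : Filter.Tendsto (fun k : ℕ => ((k : ℝ) + 1) ^ z * p ^ k) atTop (nhds 0) := by
    have := hg1.const_mul (1 / p)
    rw [mul_zero] at this
    apply this.congr
    intro k
    push_cast
    rw [pow_succ]
    field_simp
  have hg3 := hg2.const_mul C
  rw [mul_zero] at hg3
  apply squeeze_zero (fun k => NB_nonneg (by positivity) hp hp1.le z) hb hg3

lemma V_bound {α0 β0 : ℝ} (hα0 : 0 < α0) (hβ0 : 0 < β0) {N T : ℕ} (hN : 1 ≤ N)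
    (ξ : ℕ) (cp cu : ℝ) (hcp : 0 < cp) (hcpcu : cp < cu)
    (V : ℕ → ℕ → ℕ → ℝ)
    (hVT : ∀ x k, V T x k = if ξ ≤ x then cu else 0)
    (hVfail : ∀ t, t < T → ∀ x k, ξ ≤ x →
      V t x k = cu + EZK α0 β0 N t k (fun z κ => V (t + 1) z (k + z + κ)))
    (hVop : ∀ t, t < T → ∀ x k, x < ξ →
      V t x k =
        min (cp + EZK α0 β0 N t k (fun z κ => V (t + 1) z (k + z + κ)))
          (EZK α0 β0 N t k (fun z κ => V (t + 1) (x + z) (k + z + κ)))) :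
    ∀ j s, s + j = T → ∀ x k,
      0 ≤ V s x k ∧ V s x k ≤ Dseq cu (((β0 + 1) / β0) ^ 2) j := by
  have hcu : 0 < cu := lt_trans hcp hcpcu
  intro j
  induction j with
  | zero =>
    intro s hs x k
    have hsT : s = T := by omega
    subst hsT
    rw [hVT]
    show 0 ≤ _ ∧ _ ≤ cu
    split <;> constructor <;> linarith
  | succ j ih =>
    intro s hs x k
    have hsT : s < T := by omega
    have hIH : ∀ z κ, 0 ≤ V (s + 1) z κ ∧ V (s + 1) z κ ≤ Dseq cu (((β0 + 1) / β0) ^ 2) j :=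
      fun z κ => ih (s + 1) (by omega) z κ
    have hDsucc : Dseq cu (((β0 + 1) / β0) ^ 2) (j + 1)
        = cu + ((β0 + 1) / β0) ^ 2 * Dseq cu (((β0 + 1) / β0) ^ 2) j := rfl
    have hE1 := EZK_nonneg_le hα0 hβ0 hN s k (fun z κ => V (s + 1) z (k + z + κ))
      (Dseq cu (((β0 + 1) / β0) ^ 2) j) (fun z κ => (hIH _ _).1) (fun z κ => (hIH _ _).2)
    by_cases hx : ξ ≤ x
    · rw [hVfail s hsT x k hx, hDsucc]
      exact ⟨by linarith [hE1.1], by linarith [hE1.2]⟩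
    · have hE2 := EZK_nonneg_le hα0 hβ0 hN s k (fun z κ => V (s + 1) (x + z) (k + z + κ))
        (Dseq cu (((β0 + 1) / β0) ^ 2) j) (fun z κ => (hIH _ _).1) (fun z κ => (hIH _ _).2)
      rw [hVop s hsT x k (not_le.mp hx), hDsucc]
      constructor
      · exact le_min (by linarith [hE1.1]) hE2.1
      · exact le_trans (min_le_left _ _) (by linarith [hE1.2])

/-- Key limiting claim: the expected value-difference between starting at `x+Z` and
at `Z` vanishes as the pooled data `k → ∞`. -/
theorem expected_difference_tendsto_zero
    (α0 β0 : ℝ) (hα0 : 0 < α0) (hβ0 : 0 < β0)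
    (N T : ℕ) (hN : 1 ≤ N) (hT : 1 ≤ T)
    (ξ : ℕ) (hξ : 1 ≤ ξ)
    (cp cu : ℝ) (hcp : 0 < cp) (hcpcu : cp < cu)
    (V : ℕ → ℕ → ℕ → ℝ)
    (hVT : ∀ x k, V T x k = if ξ ≤ x then cu else 0)
    (hVfail : ∀ t, t < T → ∀ x k, ξ ≤ x →
      V t x k = cu + EZK α0 β0 N t k (fun z κ => V (t + 1) z (k + z + κ)))
    (hVop : ∀ t, t < T → ∀ x k, x < ξ →
      V t x k =
        min (cp + EZK α0 β0 N t k (fun z κ => V (t + 1) z (k + z + κ)))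
          (EZK α0 β0 N t k (fun z κ => V (t + 1) (x + z) (k + z + κ)))) :
    ∀ t, t < T → ∀ x : ℕ, x < ξ →
      Filter.Tendsto
        (fun k : ℕ =>
          EZK α0 β0 N t k
            (fun z κ => V (t + 1) (x + z) (k + z + κ) - V (t + 1) z (k + z + κ)))
        Filter.atTop (nhds 0) := by
  intro t ht x hx
  obtain ⟨hp, hp1, hpM⟩ := pt_facts hβ0 N t
  set p := pt β0 N t with hpdef
  set M := (β0 + 1) / β0 with hMdef
  have hM0 : 0 < M := by rw [hMdef]; positivity
  set B := Dseq cu (((β0 + 1) / β0) ^ 2) (T - (t + 1)) with hBdef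
  have hVb : ∀ z m, 0 ≤ V (t + 1) z m ∧ V (t + 1) z m ≤ B := fun z m =>
    V_bound hα0 hβ0 hN ξ cp cu hcp hcpcu V hVT hVfail hVop (T - (t + 1)) (t + 1)
      (by omega) z m
  have hB0 : 0 ≤ B := le_trans (hVb 0 0).1 (hVb 0 0).2
  have hrZ : ∀ k : ℕ, (0 : ℝ) ≤ α0 + (k : ℝ) := fun k => by positivity
  have hrK : ∀ k : ℕ, (0 : ℝ) ≤ ((N : ℝ) - 1) * (α0 + (k : ℝ)) := by
    intro k
    have h1 : (1 : ℝ) ≤ (N : ℝ) := by exact_mod_cast hN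
    have h2 : (0 : ℝ) ≤ (N : ℝ) - 1 := by linarith
    positivity
  have hFabs : ∀ k z κ, |V (t + 1) (x + z) (k + z + κ) - V (t + 1) z (k + z + κ)| ≤ 2 * B := by
    intro k z κ
    have h1 := hVb (x + z) (k + z + κ)
    have h2 := hVb z (k + z + κ)
    rw [abs_le]
    constructor <;> linarith [h1.1, h1.2, h2.1, h2.2]
  have hF0 : ∀ k z κ, ξ ≤ z →
      V (t + 1) (x + z) (k + z + κ) - V (t + 1) z (k + z + κ) = 0 := by
    intro k z κ hz
    have hxz : ξ ≤ x + z := le_trans hz (Nat.le_add_left z x)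
    rcases eq_or_lt_of_le (show t + 1 ≤ T by omega) with h | h
    · rw [h, hVT, hVT, if_pos hxz, if_pos hz, sub_self]
    · rw [hVfail (t + 1) h (x + z) _ hxz, hVfail (t + 1) h z _ hz, sub_self]
  have key : ∀ k : ℕ,
      ‖EZK α0 β0 N t k
        (fun z κ => V (t + 1) (x + z) (k + z + κ) - V (t + 1) z (k + z + κ))‖
      ≤ ∑ z ∈ Finset.range ξ, NB (α0 + (k : ℝ)) p z * (M * (2 * B)) := by
    intro k
    set NZ := NB (α0 + (k : ℝ)) p with hNZdef
    set NK := NB (((N : ℝ) - 1) * (α0 + (k : ℝ))) p with hNKdef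
    set F := fun (z κ : ℕ) => V (t + 1) (x + z) (k + z + κ) - V (t + 1) z (k + z + κ)
      with hFdef
    have hNZ0 : ∀ z, 0 ≤ NZ z := NB_nonneg (hrZ k) hp hp1.le
    have hNK0 : ∀ κ, 0 ≤ NK κ := NB_nonneg (hrK k) hp hp1.le
    obtain ⟨hNKs, hNKt⟩ := NB_summable_le (hrK k) hp hp1
    have hNKM : ∑' κ, NK κ ≤ M := le_trans hNKt hpM
    have hEeq : EZK α0 β0 N t k F = ∑' z, ∑' κ, NZ z * NK κ * F z κ := rfl
    have hable : ∀ z κ, ‖NZ z * NK κ * F z κ‖ ≤ NZ z * (2 * B) * NK κ := by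
      intro z κ
      rw [Real.norm_eq_abs, abs_mul, abs_mul, abs_of_nonneg (hNZ0 z),
        abs_of_nonneg (hNK0 κ)]
      calc NZ z * NK κ * |F z κ| ≤ NZ z * NK κ * (2 * B) :=
            mul_le_mul_of_nonneg_left (hFabs k z κ) (mul_nonneg (hNZ0 z) (hNK0 κ))
        _ = NZ z * (2 * B) * NK κ := by ring
    have hnorm_s : ∀ z, Summable (fun κ => ‖NZ z * NK κ * F z κ‖) := fun z =>
      Summable.of_nonneg_of_le (fun κ => norm_nonneg _) (hable z) (hNKs.mul_left _)
    have hGle : ∀ z, ‖∑' κ, NZ z * NK κ * F z κ‖ ≤ NZ z * (M * (2 * B)) := by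
      intro z
      calc ‖∑' κ, NZ z * NK κ * F z κ‖ ≤ ∑' κ, ‖NZ z * NK κ * F z κ‖ :=
            norm_tsum_le_tsum_norm (hnorm_s z)
        _ ≤ ∑' κ, NZ z * (2 * B) * NK κ :=
            Summable.tsum_le_tsum (hable z) (hnorm_s z) (hNKs.mul_left _)
        _ = NZ z * (2 * B) * ∑' κ, NK κ := tsum_mul_left
        _ ≤ NZ z * (2 * B) * M :=
            mul_le_mul_of_nonneg_left hNKM (mul_nonneg (hNZ0 z) (by linarith))
        _ = NZ z * (M * (2 * B)) := by ring
    have hG0 : ∀ z, ξ ≤ z → (∑' κ, NZ z * NK κ * F z κ) = 0 := by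
      intro z hz
      have h0 : ∀ κ, NZ z * NK κ * F z κ = 0 := by
        intro κ
        rw [hFdef]
        simp only []
        rw [hF0 k z κ hz, mul_zero]
      simp [h0]
    have hGs : Summable (fun z => ‖∑' κ, NZ z * NK κ * F z κ‖) := by
      apply summable_of_ne_finset_zero (s := Finset.range ξ)
      intro z hz
      rw [hG0 z (by simpa using hz), norm_zero]
    calc ‖EZK α0 β0 N t k F‖ = ‖∑' z, ∑' κ, NZ z * NK κ * F z κ‖ := by rw [hEeq]
      _ ≤ ∑' z, ‖∑' κ, NZ z * NK κ * F z κ‖ := norm_tsum_le_tsum_norm hGs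
      _ = ∑ z ∈ Finset.range ξ, ‖∑' κ, NZ z * NK κ * F z κ‖ := by
          apply tsum_eq_sum
          intro z hz
          rw [hG0 z (by simpa using hz), norm_zero]
      _ ≤ ∑ z ∈ Finset.range ξ, NZ z * (M * (2 * B)) :=
          Finset.sum_le_sum (fun z _ => hGle z)
  have hlim : Filter.Tendsto
      (fun k : ℕ => ∑ z ∈ Finset.range ξ, NB (α0 + (k : ℝ)) p z * (M * (2 * B)))
      atTop (nhds 0) := by
    have h0 : ∀ z ∈ Finset.range ξ,
        Filter.Tendsto (fun k : ℕ => NB (α0 + (k : ℝ)) p z * (M * (2 * B))) atTop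
          (nhds 0) := by
      intro z _
      simpa using (NB_tendsto hα0 hp hp1 z).mul_const (M * (2 * B))
    simpa using tendsto_finset_sum (Finset.range ξ) h0
  exact squeeze_zero_norm key hlim
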